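/- For z real and n a natural number: ∫_0^π e^{z cos θ} cos(n θ) dθ = π I_n(z). -/

import Mathlib

open MeasureTheory Real

private lemma hasDerivAt_F (k n : ℕ) (x : ℝ) :
    HasDerivAt (fun θ : ℝ => cos θ ^ (k+1) * sin (((n:ℝ)+1) * θ))
      ((((k:ℝ)+1) + ((n:ℝ)+1)) * (cos x ^ (k+1) * cos (((n:ℝ)+1) * x))
        - ((k:ℝ)+1) * (cos x ^ k * cos ((n:ℝ) * x))) x := by
  have h1 : HasDerivAt (fun θ : ℝ => cos θ ^ (k+1))
      ((((k:ℝ)+1) * cos x ^ k) * (-sin x)) x := by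
    simpa using (Real.hasDerivAt_cos x).fun_pow (k+1)
  have h2 : HasDerivAt (fun θ : ℝ => sin (((n:ℝ)+1) * θ))
      (cos (((n:ℝ)+1) * x) * ((n:ℝ)+1)) x := by
    have hl : HasDerivAt (fun θ : ℝ => ((n:ℝ)+1) * θ) ((n:ℝ)+1) x := by
      simpa using (hasDerivAt_id x).const_mul ((n:ℝ)+1)
    exact (Real.hasDerivAt_sin (((n:ℝ)+1) * x)).comp x hl
  have h := h1.fun_mul h2
  refine h.congr_deriv ?_
  have hc : cos ((n:ℝ) * x) = cos (((n:ℝ)+1) * x) * cos x + sin (((n:ℝ)+1) * x) * sin x := by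
    rw [← Real.cos_sub]; ring_nf
  rw [hc]; ring

private lemma rec_step (k n : ℕ) :
    (((k:ℝ)+1) + ((n:ℝ)+1)) * (∫ θ in (0:ℝ)..π, cos θ ^ (k+1) * cos (((n:ℝ)+1) * θ))
      = ((k:ℝ)+1) * ∫ θ in (0:ℝ)..π, cos θ ^ k * cos ((n:ℝ) * θ) := by
  have hint : ∀ (j : ℕ) (c : ℝ),
      IntervalIntegrable (fun θ : ℝ => cos θ ^ j * cos (c * θ)) volume 0 π :=
    fun j c => (Continuous.mul (by fun_prop) (by fun_prop)).intervalIntegrable 0 π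
  have key := intervalIntegral.integral_eq_sub_of_hasDerivAt
    (f := fun θ : ℝ => cos θ ^ (k+1) * sin (((n:ℝ)+1) * θ))
    (fun x _ => hasDerivAt_F k n x)
    ((((hint (k+1) ((n:ℝ)+1)).const_mul _).sub ((hint k (n:ℝ)).const_mul _)))
  have h0 : cos π ^ (k+1) * sin (((n:ℝ)+1) * π) - cos 0 ^ (k+1) * sin (((n:ℝ)+1) * 0) = 0 := by
    have : ((n:ℝ)+1) * π = ((n+1 : ℕ) : ℝ) * π := by push_cast; ring
    simp [this, Real.sin_nat_mul_pi]
  rw [h0, intervalIntegral.integral_sub ((hint (k+1) ((n:ℝ)+1)).const_mul _)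
    ((hint k (n:ℝ)).const_mul _), intervalIntegral.integral_const_mul,
    intervalIntegral.integral_const_mul] at key
  linarith [key]

private lemma int_cos_nat (n : ℕ) (hn : n ≠ 0) :
    (∫ θ in (0:ℝ)..π, cos ((n:ℝ) * θ)) = 0 := by
  have hc : (n:ℝ) ≠ 0 := Nat.cast_ne_zero.mpr hn
  rw [intervalIntegral.integral_comp_mul_left Real.cos hc]
  simp [Real.sin_nat_mul_pi]

private lemma I_eq_zero_of_lt (k : ℕ) : ∀ n : ℕ, k < n →
    (∫ θ in (0:ℝ)..π, cos θ ^ k * cos ((n:ℝ) * θ)) = 0 := by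
  induction k with
  | zero =>
    intro n hn
    simpa using int_cos_nat n (by omega)
  | succ k ih =>
    intro n hn
    obtain ⟨m, rfl⟩ : ∃ m, n = m + 1 := ⟨n-1, by omega⟩
    have h := rec_step k m
    rw [ih m (by omega), mul_zero] at h
    have hA : (((k:ℝ)+1) + ((m:ℝ)+1)) ≠ 0 := by positivity
    have h2 := (mul_eq_zero.mp h).resolve_left hA
    push_cast
    convert h2 using 3 <;> push_cast <;> ring

private lemma I_eq_zero_of_odd (k n : ℕ) (h : Odd (k + n)) :
    (∫ θ in (0:ℝ)..π, cos θ ^ k * cos ((n:ℝ) * θ)) = 0 := by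
  have hsym : (∫ θ in (0:ℝ)..π, cos θ ^ k * cos ((n:ℝ) * θ))
      = ∫ θ in (0:ℝ)..π, cos (π - θ) ^ k * cos ((n:ℝ) * (π - θ)) := by
    rw [intervalIntegral.integral_comp_sub_left
      (fun θ => cos θ ^ k * cos ((n:ℝ) * θ)) π]
    norm_num
  have hpt : ∀ θ : ℝ, cos (π - θ) ^ k * cos ((n:ℝ) * (π - θ))
      = - (cos θ ^ k * cos ((n:ℝ) * θ)) := by
    intro θ
    have h1 : (n:ℝ) * (π - θ) = (n:ℝ) * π - (n:ℝ) * θ := by ring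
    rw [Real.cos_pi_sub, h1, Real.cos_nat_mul_pi_sub, neg_pow]
    have : ((-1:ℝ))^k * ((-1:ℝ))^n = -1 := by
      rw [← pow_add]; exact h.neg_one_pow
    linear_combination (cos θ ^ k * cos ((n:ℝ) * θ)) * this
  simp_rw [hpt] at hsym
  rw [intervalIntegral.integral_neg] at hsym
  linarith [hsym]

private lemma I_base (m : ℕ) :
    (∫ θ in (0:ℝ)..π, cos θ ^ (2*m))
      = π * (2*m).factorial / (4^m * ((m.factorial : ℝ))^2) := by
  induction m with
  | zero => simp
  | succ m ih =>
    have h2 : 2*(m+1) = 2*m + 2 := by ring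
    rw [h2, integral_cos_pow, ih]
    have e1 : ((2*(m+1)).factorial : ℝ)
        = ((2*m).factorial : ℝ) * (2*m+1) * (2*m+2) := by
      have : 2*(m+1) = (2*m+1)+1 := by ring
      rw [this, Nat.factorial_succ, Nat.factorial_succ]
      push_cast; ring
    have e2 : (((m+1).factorial : ℝ)) = (m.factorial : ℝ) * (m+1) := by
      rw [Nat.factorial_succ]; push_cast; ring
    rw [show (2:ℕ)*(m+1) = 2*m+2 from by ring] at e1
    rw [e1, e2]
    have hf : (m.factorial : ℝ) ≠ 0 := Nat.cast_ne_zero.mpr m.factorial_ne_zero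
    have h4 : (4:ℝ)^m ≠ 0 := by positivity
    simp only [Real.sin_pi, Real.sin_zero, mul_zero, zero_mul, sub_zero, mul_zero, zero_div, zero_add]
    field_simp
    push_cast
    ring

private lemma I_formula : ∀ (n m : ℕ),
    (∫ θ in (0:ℝ)..π, cos θ ^ (n + 2*m) * cos ((n:ℝ) * θ))
      = π * (n + 2*m).factorial / (2^(n+2*m) * (m.factorial : ℝ) * ((n+m).factorial : ℝ)) := by
  intro n
  induction n with
  | zero =>
    intro m
    simp only [Nat.cast_zero, zero_mul, Real.cos_zero, mul_one, zero_add]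
    rw [I_base]
    rw [show (4:ℝ)^m = 2^(2*m) from by rw [pow_mul]; norm_num]
    ring
  | succ n ih =>
    intro m
    have h := rec_step (n + 2*m) n
    rw [ih m] at h
    have hA : (((n + 2*m : ℕ):ℝ)+1) + ((n:ℝ)+1) ≠ 0 := by positivity
    have hI : (∫ θ in (0:ℝ)..π, cos θ ^ (n + 2*m + 1) * cos (((n:ℝ)+1) * θ))
        = (((n + 2*m : ℕ):ℝ)+1) * (π * ((n + 2*m).factorial : ℝ)
            / (2^(n+2*m) * (m.factorial : ℝ) * ((n+m).factorial : ℝ)))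
          / ((((n + 2*m : ℕ):ℝ)+1) + ((n:ℝ)+1)) := by
      rw [eq_div_iff hA]; linarith [h]
    rw [show n + 1 + 2*m = n + 2*m + 1 from by omega]
    push_cast only [Nat.cast_add, Nat.cast_one]
    rw [hI]
    have e1 : ((n + 2*m + 1).factorial : ℝ)
        = ((n + 2*m).factorial : ℝ) * (((n + 2*m : ℕ):ℝ)+1) := by
      rw [Nat.factorial_succ]; push_cast; ring
    have e2 : ((n + 1 + m).factorial : ℝ) = ((n + m).factorial : ℝ) * (((n+m:ℕ):ℝ)+1) := by
      rw [show n + 1 + m = (n + m) + 1 from by omega, Nat.factorial_succ]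
      push_cast; ring
    rw [e1, e2, pow_succ]
    have hf1 : ((m.factorial : ℝ)) ≠ 0 := Nat.cast_ne_zero.mpr m.factorial_ne_zero
    have hf2 : (((n+m).factorial : ℝ)) ≠ 0 := Nat.cast_ne_zero.mpr (n+m).factorial_ne_zero
    have h2p : (2:ℝ)^(n+2*m) ≠ 0 := by positivity
    have hB : (((n+m:ℕ):ℝ)+1) ≠ 0 := by positivity
    field_simp
    push_cast
    ring

private lemma I_eq_zero (k n : ℕ) (h : ¬ ∃ m, k = n + 2*m) :
    (∫ θ in (0:ℝ)..π, cos θ ^ k * cos ((n:ℝ) * θ)) = 0 := by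
  rcases lt_or_ge k n with hlt | hge
  · exact I_eq_zero_of_lt k n hlt
  · rcases Nat.even_or_odd (k + n) with he | ho
    · exfalso
      obtain ⟨r, hr⟩ := he
      exact h ⟨(k - n)/2, by omega⟩
    · exact I_eq_zero_of_odd k n ho

/-- Modified Bessel function of integer order `n`, via its power series. -/
noncomputable def besselIn (n : ℕ) (z : ℝ) : ℝ :=
  ∑' m : ℕ, (z / 2) ^ (n + 2 * m) / (m.factorial * (n + m).factorial)

theorem besselIn_integral_rep (z : ℝ) (n : ℕ) :
    (∫ θ in (0 : ℝ)..π, Real.exp (z * Real.cos θ) * Real.cos (n * θ)) = π * besselIn n z := by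
  have hπ : (0:ℝ) ≤ π := pi_pos.le
  set g : ℕ → ℝ → ℝ := fun k θ => (z * cos θ)^k / k.factorial * cos ((n:ℝ) * θ) with hg
  have hexp : ∀ θ : ℝ, Real.exp (z * cos θ) * cos ((n:ℝ) * θ) = ∑' k : ℕ, g k θ := by
    intro θ
    rw [Real.exp_eq_exp_ℝ, NormedSpace.exp_eq_tsum_div]
    exact (tsum_mul_right).symm
  -- interchange
  have hcont : ∀ k : ℕ, Continuous (g k) := by
    intro k; fun_prop
  have hInt : ∀ k : ℕ, IntegrableOn (g k) (Set.Ioc (0:ℝ) π) volume :=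
    fun k => (hcont k).integrableOn_Ioc
  have hbound : ∀ k : ℕ, (∫ θ in Set.Ioc (0:ℝ) π, ‖g k θ‖) ≤ |z|^k / k.factorial * π := by
    intro k
    have hle : ∀ θ ∈ Set.Ioc (0:ℝ) π, ‖g k θ‖ ≤ |z|^k / k.factorial := by
      intro θ _
      have hz : |z * cos θ| ≤ |z| := by
        rw [abs_mul]
        nlinarith [Real.abs_cos_le_one θ, abs_nonneg z, abs_nonneg (cos θ)]
      have h1 : |z * cos θ|^k ≤ |z|^k := pow_le_pow_left₀ (abs_nonneg _) hz k
      have h2 : |cos ((n:ℝ)*θ)| ≤ 1 := Real.abs_cos_le_one _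
      have h3 : (0:ℝ) < k.factorial := by positivity
      have hgeq : ‖g k θ‖ = |z * cos θ|^k / k.factorial * |cos ((n:ℝ)*θ)| := by
        simp [hg, abs_mul, abs_div, abs_of_pos h3, abs_pow]
      rw [hgeq]
      calc |z * cos θ|^k / (k.factorial:ℝ) * |cos ((n:ℝ)*θ)|
          ≤ |z|^k / k.factorial * 1 :=
            mul_le_mul (by gcongr) h2 (abs_nonneg _) (by positivity)
        _ = |z|^k / k.factorial := mul_one _
    calc (∫ θ in Set.Ioc (0:ℝ) π, ‖g k θ‖)
        ≤ ∫ θ in Set.Ioc (0:ℝ) π, |z|^k / k.factorial := by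
          apply setIntegral_mono_on ((hInt k).norm) (integrableOn_const (by
            simp [Real.volume_Ioc])) measurableSet_Ioc hle
      _ = |z|^k / k.factorial * π := by
          rw [setIntegral_const]
          simp [Real.volume_Ioc, ENNReal.toReal_ofReal hπ]
          rw [max_eq_left hπ]
          ring
  have hsummable : Summable (fun k : ℕ => ∫ θ in Set.Ioc (0:ℝ) π, ‖g k θ‖) := by
    apply Summable.of_nonneg_of_le (fun k => integral_nonneg (fun θ => norm_nonneg _)) hbound
    exact (Real.summable_pow_div_factorial |z|).mul_right π
  have hswap := MeasureTheory.integral_tsum_of_summable_integral_norm hInt hsummable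
  rw [intervalIntegral.integral_of_le hπ]
  have hcongr : (∫ θ in Set.Ioc (0:ℝ) π, Real.exp (z * cos θ) * cos ((n:ℝ)*θ))
      = ∫ θ in Set.Ioc (0:ℝ) π, ∑' k, g k θ := by
    simp_rw [hexp]
  rw [hcongr, ← hswap]
  have hterm : ∀ k : ℕ, (∫ θ in Set.Ioc (0:ℝ) π, g k θ)
      = z^k / k.factorial * ∫ θ in (0:ℝ)..π, cos θ^k * cos ((n:ℝ)*θ) := by
    intro k
    rw [← intervalIntegral.integral_of_le hπ, ← intervalIntegral.integral_const_mul]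
    apply intervalIntegral.integral_congr
    intro θ _
    simp only [hg, mul_pow]
    ring
  simp_rw [hterm]
  set f : ℕ → ℝ := fun k => z^k / k.factorial * ∫ θ in (0:ℝ)..π, cos θ^k * cos ((n:ℝ)*θ)
    with hf
  have hinj : Function.Injective (fun m : ℕ => n + 2*m) := fun a b h => by dsimp at h; omega
  have hsupp : Function.support f ⊆ Set.range (fun m : ℕ => n + 2*m) := by
    intro k hk
    by_contra hr
    apply hk
    have hne : ¬ ∃ m, k = n + 2*m := by
      rintro ⟨m, hm⟩
      exact hr ⟨m, hm.symm⟩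
    simp [hf, I_eq_zero k n hne]
  rw [← hinj.tsum_eq hsupp, besselIn, ← tsum_mul_left]
  apply tsum_congr
  intro m
  simp only [hf]
  rw [I_formula n m, div_pow]
  have h1 : ((n+2*m).factorial : ℝ) ≠ 0 := Nat.cast_ne_zero.mpr (n+2*m).factorial_ne_zero
  have h2 : ((m.factorial : ℝ)) ≠ 0 := Nat.cast_ne_zero.mpr m.factorial_ne_zero
  have h3 : (((n+m).factorial : ℝ)) ≠ 0 := Nat.cast_ne_zero.mpr (n+m).factorial_ne_zero
  have h4 : (2:ℝ)^(n+2*m) ≠ 0 := by positivity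
  field_simp
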